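/- For integers n ≥ 4, C(n) ≤ C(4), where C(n) = -min_{x>0} f_n(x) and f_n(x) = (Σ_{j=1}^{n-1} ((n-j)/(j!·n))·x^{j+1}) - x; moreover C(4) < 0.28. -/

import Mathlib

noncomputable def f (n : ℕ) (x : ℝ) : ℝ :=
  (∑ j ∈ Finset.Icc 1 (n - 1), ((n : ℝ) - (j : ℝ)) / ((j.factorial : ℝ) * n) * x ^ (j + 1)) - x

noncomputable def C (n : ℕ) : ℝ := -sInf ((fun x => f n x) '' Set.Ioi (0 : ℝ))

lemma f4_lower (x : ℝ) (hx : 0 < x) : f 4 x ≥ -0.2799 := by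
  simp only [f, show (4:ℕ)-1 = 3 from rfl, Finset.sum_Icc_succ_top (by norm_num : (1:ℕ) ≤ 3),
    Finset.sum_Icc_succ_top (by norm_num : (1:ℕ) ≤ 2), Finset.Icc_self, Finset.sum_singleton]
  norm_num [Nat.factorial]
  nlinarith [sq_nonneg (x^2+3*x-1.5), sq_nonneg (x-0.5174), sq_nonneg x, sq_nonneg (x^2-0.27),
    mul_pos hx hx, sq_nonneg (x*(x-0.5174)), sq_nonneg (x^2+3.5*x-2)]

lemma f_mono (n : ℕ) (hn : 4 ≤ n) (x : ℝ) (hx : 0 < x) : f 4 x ≤ f n x := by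
  unfold f
  apply sub_le_sub_right
  have hsub : Finset.Icc 1 3 ⊆ Finset.Icc 1 (n - 1) := by
    apply Finset.Icc_subset_Icc_right; omega
  calc ∑ j ∈ Finset.Icc (1:ℕ) (4-1), ((4:ℝ) - j) / (j.factorial * 4) * x ^ (j+1)
      ≤ ∑ j ∈ Finset.Icc (1:ℕ) 3, ((n:ℝ) - j) / (j.factorial * n) * x ^ (j+1) := by
        apply Finset.sum_le_sum
        intro j hj
        simp only [Finset.mem_Icc] at hj
        have hj3 : (j:ℝ) ≤ 3 := by exact_mod_cast hj.2
        have hn4 : (4:ℝ) ≤ n := by exact_mod_cast hn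
        have hfac : (0:ℝ) < j.factorial := by exact_mod_cast j.factorial_pos
        have hxp : (0:ℝ) < x ^ (j+1) := pow_pos hx _
        apply mul_le_mul_of_nonneg_right _ hxp.le
        rw [div_le_div_iff₀ (by positivity) (by positivity)]
        have hjn : (j:ℝ) * 4 ≤ j * n := by nlinarith
        nlinarith [hfac]
    _ ≤ ∑ j ∈ Finset.Icc (1:ℕ) (n-1), ((n:ℝ) - j) / (j.factorial * n) * x ^ (j+1) := by
        apply Finset.sum_le_sum_of_subset_of_nonneg hsub
        intro j hj _
        simp only [Finset.mem_Icc] at hj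
        have hjle : j ≤ n := by omega
        have h1 : (j:ℝ) ≤ n := by exact_mod_cast hjle
        have h2 : (0:ℝ) ≤ (n:ℝ) - j := by linarith
        positivity

lemma bdd4 : BddBelow ((fun x => f 4 x) '' Set.Ioi (0 : ℝ)) := by
  refine ⟨-0.2799, ?_⟩
  rintro y ⟨x, hx, rfl⟩
  exact f4_lower x hx

lemma sInf4_ge : (-0.2799 : ℝ) ≤ sInf ((fun x => f 4 x) '' Set.Ioi (0 : ℝ)) := by
  apply le_csInf (Set.Nonempty.image _ ⟨1, by norm_num⟩)
  rintro y ⟨x, hx, rfl⟩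
  exact f4_lower x hx

theorem C_nonincreasing_and_C4_bound :
    (∀ n : ℕ, 4 ≤ n → C n ≤ C 4) ∧ C 4 < 0.28 := by
  constructor
  · intro n hn
    unfold C
    apply neg_le_neg
    apply le_csInf (Set.Nonempty.image _ ⟨1, by norm_num⟩)
    rintro y ⟨x, hx, rfl⟩
    exact le_trans (csInf_le bdd4 ⟨x, hx, rfl⟩) (f_mono n hn x hx)
  · unfold C
    have := sInf4_ge
    norm_num at this ⊢
    linarith
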